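/- Every effective co-number function M (i.e., a function on counting vectors satisfying additivity, symmetry, continuity on each W_N, the monotonicity M(...,pᵢ,...,pⱼ,...) ≤ M(...,pᵢ−ε,...,pⱼ+ε,...) for pᵢ ≤ pⱼ and 0 < ε ≤ min(pᵢ, N−pⱼ), and the boundary condition M(N,0,...,0) = N−1) satisfies: M[P] = M[Q] whenever P, Q ∈ W_N have the same multiset of entries strictly less than 1. Consequently M is additively separable. -/

import Mathlib

/-- A counting vector of dimension `N`: nonnegative entries summing to `N`. -/
def IsCountingVector {N : ℕ} (P : Fin N → ℝ) : Prop :=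
  (∀ i, 0 ≤ P i) ∧ ∑ i, P i = N

/-- An effective co-number function (co-ENF): additive under concatenation,
symmetric, continuous on each `W_N`, monotone under cumulation (M⁺), and with
boundary values `M(N,0,...,0) = N − 1`. -/
def IsCoENF (M : ∀ N : ℕ, (Fin N → ℝ) → ℝ) : Prop :=
  -- (A) additivity
  (∀ (N K : ℕ) (P : Fin N → ℝ) (Q : Fin K → ℝ),
    IsCountingVector P → IsCountingVector Q →
    M (N + K) (Fin.append P Q) = M N P + M K Q) ∧
  -- (S) symmetry
  (∀ (N : ℕ) (P : Fin N → ℝ), IsCountingVector P →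
    ∀ σ : Equiv.Perm (Fin N), M N (P ∘ σ) = M N P) ∧
  -- (C) continuity on each W_N
  (∀ N : ℕ, ContinuousOn (M N) {P : Fin N → ℝ | IsCountingVector P}) ∧
  -- (M⁺) cumulation monotonicity
  (∀ (N : ℕ) (P : Fin N → ℝ), IsCountingVector P →
    ∀ i j : Fin N, i ≠ j → P i ≤ P j →
    ∀ ε : ℝ, 0 < ε → ε ≤ P i → ε ≤ N - P j →
      M N P ≤ M N (Function.update (Function.update P i (P i - ε)) j (P j + ε))) ∧
  -- (co-B2) boundary values
  (∀ N : ℕ, M (N + 1) (fun k => if k = 0 then ((N + 1 : ℕ) : ℝ) else 0) = N)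

/-- The multiset of entries of `P` that are strictly less than 1. -/
noncomputable def entriesLtOne {N : ℕ} (P : Fin N → ℝ) : Multiset ℝ :=
  (Finset.univ.val.map P).filter (fun x => x < 1)

namespace CoENFAux

variable (M : ∀ N : ℕ, (Fin N → ℝ) → ℝ)

/-- `M` as a function of the multiset of entries (via the sorted enumeration). -/
noncomputable def MM (s : Multiset ℝ) : ℝ :=
  M (Multiset.card s) fun i => (s.sort (· ≤ ·)).get (Fin.cast (Multiset.length_sort _).symm i)

/-- counting condition for lists -/
def CVL (l : List ℝ) : Prop := (∀ x ∈ l, 0 ≤ x) ∧ l.sum = l.length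

/-- counting condition for multisets -/
def CVM (s : Multiset ℝ) : Prop := (∀ x ∈ s, 0 ≤ x) ∧ s.sum = Multiset.card s

lemma M_cast {n m : ℕ} (h : n = m) (f : Fin m → ℝ) :
    M n (fun i => f (Fin.cast h i)) = M m f := by subst h; rfl

lemma get_congr {l l' : List ℝ} (h : l = l') {N : ℕ} (hl : N = l.length)
    (hl' : N = l'.length) :
    (fun i : Fin N => l.get (Fin.cast hl i)) = fun i => l'.get (Fin.cast hl' i) := by
  subst h; rfl

lemma counting_get {l : List ℝ} (h : CVL l) : IsCountingVector (l.get) := by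
  constructor
  · intro i
    have := l.get_mem i
    simpa using h.1 _ this
  · have : (List.ofFn l.get).sum = ∑ i, l.get i := List.sum_ofFn
    rw [List.ofFn_get] at this
    rw [← this, h.2]

variable {M}

theorem bridge (hM : IsCoENF M) {N : ℕ} (P : Fin N → ℝ) (hP : IsCountingVector P) :
    M N P = MM M ↑(List.ofFn P) := by
  obtain ⟨hA, hS, hC, hMo, hB⟩ := hM
  set s : Multiset ℝ := ↑(List.ofFn P) with hs
  have hcard : Multiset.card s = N := by simp [hs]
  have hlen : N = (s.sort (· ≤ ·)).length := by rw [Multiset.length_sort, hcard]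
  have hlist : List.ofFn (P ∘ (Tuple.sort P)) = s.sort (· ≤ ·) := by
    refine (fun hp h1 h2 => List.Perm.eq_of_pairwise' h1 h2 hp) ?_ ?_ (Multiset.pairwise_sort _ _)
    · rw [← Multiset.coe_eq_coe, Multiset.sort_eq]
      rw [← Fin.univ_val_map, hs, ← Fin.univ_val_map]
      have huniv : Finset.univ.val.map (⇑(Tuple.sort P)) = Finset.univ.val := by
        conv_rhs => rw [← Finset.univ_map_equiv_to_embedding (Tuple.sort P)]
        rfl
      calc Finset.univ.val.map (P ∘ (Tuple.sort P))
          = (Finset.univ.val.map (⇑(Tuple.sort P))).map P :=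
            (Multiset.map_map _ _ _).symm
        _ = Finset.univ.val.map P := by rw [huniv]
    · exact (Tuple.monotone_sort P).sortedLE_ofFn.pairwise
  have h1 : M N (P ∘ (Tuple.sort P)) = M N P := hS N P hP _
  rw [← h1]
  have h2 : MM M s = M N (fun i : Fin N => (s.sort (· ≤ ·)).get (Fin.cast hlen i)) := by
    rw [MM, ← M_cast M hcard]
    congr 1
  rw [h2]
  rw [← get_congr hlist (by simp) hlen]
  congr 1
  funext i
  rw [List.get_ofFn]
  rfl

lemma counting_append {n m : ℕ} {P : Fin n → ℝ} {Q : Fin m → ℝ}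
    (hP : IsCountingVector P) (hQ : IsCountingVector Q) :
    IsCountingVector (Fin.append P Q) := by
  constructor
  · intro i
    refine Fin.addCases (fun i => ?_) (fun i => ?_) i
    · rw [Fin.append_left]; exact hP.1 i
    · rw [Fin.append_right]; exact hQ.1 i
  · rw [Fin.sum_univ_add]
    simp only [Fin.append_left, Fin.append_right]
    rw [hP.2, hQ.2]
    push_cast
    ring

theorem bridge_list (hM : IsCoENF M) (l : List ℝ) (h : CVL l) :
    M l.length l.get = MM M ↑l := by
  rw [bridge hM _ (counting_get h), List.ofFn_get]

theorem MM_add (hM : IsCoENF M) {s t : Multiset ℝ} (hs : CVM s) (ht : CVM t) :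
    MM M (s + t) = MM M s + MM M t := by
  obtain ⟨a, ha⟩ : ∃ a : List ℝ, ↑a = s := ⟨s.toList, Multiset.coe_toList s⟩
  obtain ⟨b, hb⟩ : ∃ b : List ℝ, ↑b = t := ⟨t.toList, Multiset.coe_toList t⟩
  subst ha hb
  have ha' : CVL a := by
    constructor
    · intro x hx; exact hs.1 x (by simpa using hx)
    · have := hs.2; simpa using this
  have hb' : CVL b := by
    constructor
    · intro x hx; exact ht.1 x (by simpa using hx)
    · have := ht.2; simpa using this
  have key := hM.1 a.length b.length a.get b.get (counting_get ha') (counting_get hb')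
  have h1 : M (a.length + b.length) (Fin.append a.get b.get) = MM M ↑(a ++ b) := by
    rw [bridge hM _ (counting_append (counting_get ha') (counting_get hb'))]
    congr 2
    rw [List.ofFn_fin_append, List.ofFn_get, List.ofFn_get]
  rw [h1, bridge_list hM a ha', bridge_list hM b hb'] at key
  have h2 : (↑(a ++ b) : Multiset ℝ) = ↑a + ↑b := by simp
  rw [h2] at key
  exact key

lemma CVM_nil : CVM (0 : Multiset ℝ) := by simp [CVM]

lemma MM_nil (hM : IsCoENF M) : MM M 0 = 0 := by
  have := MM_add hM CVM_nil CVM_nil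
  simp at this
  linarith

lemma CVM_one : CVM ({1} : Multiset ℝ) := by simp [CVM]

lemma MM_one (hM : IsCoENF M) : MM M {1} = 0 := by
  have hb := hM.2.2.2.2 0
  have hcv : IsCountingVector (fun k : Fin (0 + 1) => if k = 0 then ((0 + 1 : ℕ) : ℝ) else 0) := by
    constructor
    · intro i; dsimp only; split <;> norm_num
    · simp
  have h1 := bridge hM _ hcv
  rw [hb] at h1
  have h2 : (List.ofFn fun k : Fin (0 + 1) => if k = 0 then ((0 + 1 : ℕ) : ℝ) else 0) = [1] := by
    simp [List.ofFn_succ]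
  rw [h2] at h1
  have h3 : (↑([1] : List ℝ) : Multiset ℝ) = {1} := by rfl
  rw [h3] at h1
  simpa using h1.symm

lemma MM_block (hM : IsCoENF M) (K : ℕ) :
    MM M (((K : ℝ) + 1) ::ₘ Multiset.replicate K (0 : ℝ)) = K := by
  have hb := hM.2.2.2.2 K
  have hcv : IsCountingVector (fun k : Fin (K + 1) => if k = 0 then ((K + 1 : ℕ) : ℝ) else 0) := by
    constructor
    · intro i; dsimp only; split <;> positivity
    · rw [Finset.sum_ite_eq' Finset.univ (0 : Fin (K + 1)) (fun _ => ((K + 1 : ℕ) : ℝ))]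
      simp
  have h1 := bridge hM _ hcv
  rw [hb] at h1
  have h2 : (List.ofFn fun k : Fin (K + 1) => if k = 0 then ((K + 1 : ℕ) : ℝ) else 0)
      = ((K : ℝ) + 1) :: List.replicate K 0 := by
    rw [List.ofFn_succ]
    simp [Fin.succ_ne_zero, List.ofFn_const, Nat.cast_add, Nat.cast_one]
  rw [h2] at h1
  have h3 : (↑(((K : ℝ) + 1) :: List.replicate K 0) : Multiset ℝ)
      = ((K : ℝ) + 1) ::ₘ Multiset.replicate K (0 : ℝ) := by
    rw [← Multiset.cons_coe, Multiset.coe_replicate]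
  rw [h3] at h1
  exact h1.symm

lemma MM_cons_one (hM : IsCoENF M) {s : Multiset ℝ} (hs : CVM s) :
    MM M ((1 : ℝ) ::ₘ s) = MM M s := by
  have : (1 : ℝ) ::ₘ s = {1} + s := by simp
  rw [this, MM_add hM CVM_one hs, MM_one hM]
  ring

lemma CVM_cons_cons {a b : ℝ} {u : Multiset ℝ} :
    CVM (a ::ₘ b ::ₘ u) ↔ ((0 ≤ a ∧ 0 ≤ b ∧ ∀ x ∈ u, 0 ≤ x) ∧
      a + b + u.sum = (Multiset.card u : ℝ) + 2) := by
  constructor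
  · rintro ⟨h0, h1⟩
    refine ⟨⟨h0 a (by simp), h0 b (by simp), fun x hx => h0 x (by simp [hx])⟩, ?_⟩
    simp only [Multiset.sum_cons, Multiset.card_cons] at h1
    push_cast at h1
    linarith
  · rintro ⟨⟨ha, hb, hu⟩, hsum⟩
    constructor
    · intro x hx
      simp only [Multiset.mem_cons] at hx
      rcases hx with rfl | rfl | hx
      · exact ha
      · exact hb
      · exact hu x hx
    · simp only [Multiset.sum_cons, Multiset.card_cons]
      push_cast
      linarith

lemma MM_transfer (hM : IsCoENF M) (a b ε : ℝ) (u : Multiset ℝ)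
    (h : CVM (a ::ₘ b ::ₘ u)) (hab : a ≤ b) (hε0 : 0 < ε) (hεa : ε ≤ a) :
    MM M (a ::ₘ b ::ₘ u) ≤ MM M ((a - ε) ::ₘ (b + ε) ::ₘ u) := by
  obtain ⟨⟨ha, hb, hu⟩, hsum⟩ := CVM_cons_cons.1 h
  set t : List ℝ := u.toList with ht
  have htu : (↑t : Multiset ℝ) = u := Multiset.coe_toList u
  have htsum : t.sum = u.sum := by rw [← htu]; rfl
  have htcard : (t.length : ℕ) = Multiset.card u := by rw [← htu]; rfl
  have htnn : ∀ x ∈ t, 0 ≤ (x:ℝ) := fun x hx => hu x (by rw [← htu]; exact hx)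
  have htsum0 : 0 ≤ t.sum := List.sum_nonneg htnn
  set l : List ℝ := a :: b :: t with hl
  have hlsum : l.sum = a + b + t.sum := by simp [hl]; ring
  have hllen : l.length = t.length + 2 := by simp [hl]
  have hlcv : CVL l := by
    constructor
    · intro x hx
      simp only [hl, List.mem_cons] at hx
      rcases hx with rfl | rfl | hx
      · exact ha
      · exact hb
      · exact htnn x hx
    · rw [hlsum, hllen, htsum]; push_cast; rw [htcard]; linarith
  set l' : List ℝ := (a - ε) :: (b + ε) :: t with hl'
  have hl'cv : CVL l' := by
    constructor
    · intro x hx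
      simp only [hl', List.mem_cons] at hx
      rcases hx with rfl | rfl | hx
      · linarith
      · linarith
      · exact htnn x hx
    · simp only [hl', List.sum_cons, List.length_cons]
      rw [htsum]; push_cast; rw [htcard]; linarith
  have hPcv := counting_get hlcv
  set i₀ : Fin l.length := ⟨0, by rw [hllen]; omega⟩
  set j₀ : Fin l.length := ⟨1, by rw [hllen]; omega⟩
  have hij : i₀ ≠ j₀ := by simp [i₀, j₀, Fin.ext_iff]
  have hgi : l.get i₀ = a := rfl
  have hgj : l.get j₀ = b := rfl
  have hεN : ε ≤ (l.length : ℝ) - l.get j₀ := by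
    rw [hgj]
    have : (l.length : ℝ) = l.sum := by rw [hlcv.2]
    rw [this, hlsum]
    linarith
  have key := hM.2.2.2.1 l.length l.get hPcv i₀ j₀ hij (by rw [hgi, hgj]; exact hab)
    ε hε0 (by rw [hgi]; exact hεa) hεN
  have hupd : Function.update (Function.update l.get i₀ (l.get i₀ - ε)) j₀ (l.get j₀ + ε)
      = l'.get := by
    funext i
    rcases i with ⟨iv, hiv⟩
    match iv, hiv with
    | 0, hiv =>
      rw [Function.update_of_ne (by simp [j₀, Fin.ext_iff]) _ _]
      rw [show (⟨0, hiv⟩ : Fin l.length) = i₀ from rfl, Function.update_self]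
      rfl
    | 1, hiv =>
      rw [show (⟨1, hiv⟩ : Fin l.length) = j₀ from rfl, Function.update_self]
      rfl
    | (n+2), hiv =>
      rw [Function.update_of_ne (by simp [j₀, Fin.ext_iff, Nat.mod_eq_of_lt (show 1 < l.length by omega)]) _ _]
      rw [Function.update_of_ne (by simp [i₀, Fin.ext_iff]) _ _]
      rfl
  rw [hupd] at key
  have e1 : M l.length l.get = MM M (a ::ₘ b ::ₘ u) := by
    rw [bridge_list hM l hlcv]
    congr 1
    rw [hl, ← htu]
    rfl
  have e2 : M l.length l'.get = MM M ((a - ε) ::ₘ (b + ε) ::ₘ u) := by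
    have : M l.length l'.get = M l'.length l'.get := rfl
    rw [this, bridge_list hM l' hl'cv]
    congr 1
    rw [hl', ← htu]
    rfl
  rw [e1, e2] at key
  exact key

lemma MM_transfer' (hM : IsCoENF M) (a b ε : ℝ) (u : Multiset ℝ)
    (h : CVM (a ::ₘ b ::ₘ u)) (hab : a ≤ b) (hε0 : 0 ≤ ε) (hεa : ε ≤ a) :
    MM M (a ::ₘ b ::ₘ u) ≤ MM M ((a - ε) ::ₘ (b + ε) ::ₘ u) := by
  rcases eq_or_lt_of_le hε0 with rfl | hε
  · simp
  · exact MM_transfer hM a b ε u h hab hε hεa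

/-- helper to prove `CVM` goals -/
lemma CVM_of (s : Multiset ℝ) (h1 : ∀ x ∈ s, 0 ≤ x) (h2 : s.sum = Multiset.card s) : CVM s :=
  ⟨h1, h2⟩

lemma MM_plusblock (hM : IsCoENF M) (x : ℝ) (s : Multiset ℝ) (hx : 1 ≤ x)
    (h : CVM (x ::ₘ s)) :
    MM M ((x + 1) ::ₘ (0 : ℝ) ::ₘ s) = MM M (x ::ₘ s) + 1 := by
  have hsnn : ∀ y ∈ s, 0 ≤ y := fun y hy => h.1 y (by simp [hy])
  have hssum : x + s.sum = (Multiset.card s : ℝ) + 1 := by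
    have := h.2; simp only [Multiset.sum_cons, Multiset.card_cons] at this
    push_cast at this; linarith
  have hsum0 : 0 ≤ s.sum := Multiset.sum_nonneg hsnn
  have hcv1 : CVM ((x + 1) ::ₘ (0 : ℝ) ::ₘ s) := by
    refine CVM_of _ ?_ ?_
    · intro y hy; simp only [Multiset.mem_cons] at hy
      rcases hy with rfl | rfl | hy
      · linarith
      · exact le_refl 0
      · exact hsnn y hy
    · simp only [Multiset.sum_cons, Multiset.card_cons]; push_cast; linarith
  -- lower bound
  have b2 : MM M ((2 : ℝ) ::ₘ {0}) = 1 := by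
    have := MM_block hM 1
    norm_num at this
    exact this
  have hlow : MM M (x ::ₘ s) + 1 ≤ MM M ((x + 1) ::ₘ (0 : ℝ) ::ₘ s) := by
    have hcvL : CVM ((2:ℝ) ::ₘ {0}) := by
      refine CVM_of _ ?_ ?_
      · intro y hy
        simp only [Multiset.mem_cons, Multiset.mem_singleton] at hy
        rcases hy with rfl | rfl <;> norm_num
      · simp
    have e1 : MM M (x ::ₘ s) + 1 = MM M ((x ::ₘ s) + ((2:ℝ) ::ₘ {0})) := by
      rw [MM_add hM h hcvL, b2]
    have e2 : (x ::ₘ s) + ((2:ℝ) ::ₘ {0}) = x ::ₘ (2:ℝ) ::ₘ (0:ℝ) ::ₘ s := by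
      simp only [← Multiset.singleton_add]
      abel
    have hcvZ : CVM (x ::ₘ (2:ℝ) ::ₘ (0:ℝ) ::ₘ s) := by
      rw [← e2]; exact ⟨fun y hy => by
        rcases Multiset.mem_add.1 hy with hy | hy
        · exact h.1 y hy
        · exact hcvL.1 y hy, by
        simp only [Multiset.sum_add, Multiset.card_add]
        rw [h.2, hcvL.2]; push_cast; ring⟩
    have step : MM M (x ::ₘ (2:ℝ) ::ₘ (0:ℝ) ::ₘ s) ≤ MM M ((1:ℝ) ::ₘ (x+1) ::ₘ (0:ℝ) ::ₘ s) := by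
      rcases le_or_gt 2 x with h2x | h2x
      · -- transfer from the 2 to x
        have e3 : x ::ₘ (2:ℝ) ::ₘ (0:ℝ) ::ₘ s = (2:ℝ) ::ₘ x ::ₘ (0:ℝ) ::ₘ s :=
          Multiset.cons_swap _ _ _
        have hcv' : CVM ((2:ℝ) ::ₘ x ::ₘ (0:ℝ) ::ₘ s) := by rw [← e3]; exact hcvZ
        have tr := MM_transfer' hM 2 x 1 ((0:ℝ) ::ₘ s) hcv' h2x (by norm_num) (by norm_num)
        rw [e3]
        calc MM M ((2:ℝ) ::ₘ x ::ₘ (0:ℝ) ::ₘ s) ≤ MM M ((2 - 1 : ℝ) ::ₘ (x + 1) ::ₘ (0:ℝ) ::ₘ s) := tr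
          _ = MM M ((1:ℝ) ::ₘ (x+1) ::ₘ (0:ℝ) ::ₘ s) := by norm_num
      · -- transfer from x to the 2
        have tr := MM_transfer' hM x 2 (x - 1) ((0:ℝ) ::ₘ s) hcvZ (le_of_lt h2x)
          (by linarith) (by linarith)
        calc MM M (x ::ₘ (2:ℝ) ::ₘ (0:ℝ) ::ₘ s)
            ≤ MM M ((x - (x-1)) ::ₘ (2 + (x - 1)) ::ₘ (0:ℝ) ::ₘ s) := tr
          _ = MM M ((1:ℝ) ::ₘ (x+1) ::ₘ (0:ℝ) ::ₘ s) := by ring_nf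
    have efin : MM M ((1:ℝ) ::ₘ (x+1) ::ₘ (0:ℝ) ::ₘ s) = MM M ((x+1) ::ₘ (0:ℝ) ::ₘ s) :=
      MM_cons_one hM hcv1
    calc MM M (x ::ₘ s) + 1 = MM M (x ::ₘ (2:ℝ) ::ₘ (0:ℝ) ::ₘ s) := by rw [e1, e2]
      _ ≤ MM M ((1:ℝ) ::ₘ (x+1) ::ₘ (0:ℝ) ::ₘ s) := step
      _ = MM M ((x+1) ::ₘ (0:ℝ) ::ₘ s) := efin
  -- upper bound
  have hupp : MM M ((x + 1) ::ₘ (0 : ℝ) ::ₘ s) ≤ MM M (x ::ₘ s) + 1 := by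
    set K₁ : ℕ := ⌈x⌉₊ + 1 with hK₁
    set B : ℝ := (K₁ : ℝ) + 1 with hB
    have hxB : x + 1 ≤ B := by
      have := Nat.le_ceil x
      rw [hB, hK₁]; push_cast; linarith
    have hblk1 : CVM (B ::ₘ Multiset.replicate K₁ (0:ℝ)) := by
      refine CVM_of _ ?_ ?_
      · intro y hy; simp only [Multiset.mem_cons, Multiset.mem_replicate] at hy
        rcases hy with rfl | ⟨-, rfl⟩
        · positivity
        · exact le_refl 0
      · simp [Multiset.sum_replicate, hB, hK₁]
    have hblk2 : CVM ((B + 1) ::ₘ Multiset.replicate (K₁ + 1) (0:ℝ)) := by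
      refine CVM_of _ ?_ ?_
      · intro y hy; simp only [Multiset.mem_cons, Multiset.mem_replicate] at hy
        rcases hy with rfl | ⟨-, rfl⟩
        · positivity
        · exact le_refl 0
      · simp [Multiset.sum_replicate, hB, hK₁]
    have hZcv : CVM ((x+1) ::ₘ B ::ₘ ((1:ℝ) ::ₘ (0:ℝ) ::ₘ (Multiset.replicate K₁ (0:ℝ) + s))) := by
      refine CVM_of _ ?_ ?_
      · intro y hy
        simp only [Multiset.mem_cons, Multiset.mem_add, Multiset.mem_replicate] at hy
        rcases hy with rfl | rfl | rfl | rfl | ⟨-, rfl⟩ | hy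
        · linarith
        · positivity
        · norm_num
        · exact le_refl 0
        · exact le_refl 0
        · exact hsnn y hy
      · simp only [Multiset.sum_cons, Multiset.card_cons, Multiset.sum_add,
          Multiset.card_add, Multiset.sum_replicate, Multiset.card_replicate]
        have hBe : B = (⌈x⌉₊ : ℝ) + 2 := by rw [hB, hK₁]; push_cast; ring
        push_cast
        simp only [add_zero, zero_add, smul_zero, nsmul_eq_mul, mul_zero]
        linarith [hBe, hssum]
    have tr := MM_transfer' hM (x+1) B 1 ((1:ℝ) ::ₘ (0:ℝ) ::ₘ (Multiset.replicate K₁ (0:ℝ) + s))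
      hZcv hxB (by norm_num) (by linarith)
    have eZ : ((x+1) ::ₘ (0:ℝ) ::ₘ s) + (B ::ₘ Multiset.replicate K₁ (0:ℝ)) + ({1} : Multiset ℝ)
        = (x+1) ::ₘ B ::ₘ ((1:ℝ) ::ₘ (0:ℝ) ::ₘ (Multiset.replicate K₁ (0:ℝ) + s)) := by
      simp only [← Multiset.singleton_add]; abel
    have eZ' : ((x+1) - 1) ::ₘ (B + 1) ::ₘ ((1:ℝ) ::ₘ (0:ℝ) ::ₘ (Multiset.replicate K₁ (0:ℝ) + s))
        = (x ::ₘ s) + ((B+1) ::ₘ Multiset.replicate (K₁+1) (0:ℝ)) + ({1} : Multiset ℝ) := by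
      have : (x + 1) - 1 = x := by ring
      rw [this]
      simp only [← Multiset.singleton_add, Multiset.replicate_succ, ← Multiset.singleton_add]
      abel
    have lhsval : MM M (((x+1) ::ₘ (0:ℝ) ::ₘ s) + (B ::ₘ Multiset.replicate K₁ (0:ℝ))
        + ({1} : Multiset ℝ)) = MM M ((x+1) ::ₘ (0:ℝ) ::ₘ s) + (K₁ : ℝ) := by
      rw [MM_add hM _ CVM_one, MM_add hM hcv1 hblk1, MM_one hM]
      · have : MM M (B ::ₘ Multiset.replicate K₁ (0:ℝ)) = K₁ := MM_block hM K₁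
        rw [this]; ring
      · exact ⟨fun y hy => by
          rcases Multiset.mem_add.1 hy with hy | hy
          · exact hcv1.1 y hy
          · exact hblk1.1 y hy, by
          simp only [Multiset.sum_add, Multiset.card_add]
          rw [hcv1.2, hblk1.2]; push_cast; ring⟩
    have rhsval : MM M ((x ::ₘ s) + ((B+1) ::ₘ Multiset.replicate (K₁+1) (0:ℝ))
        + ({1} : Multiset ℝ)) = MM M (x ::ₘ s) + (K₁ : ℝ) + 1 := by
      rw [MM_add hM _ CVM_one, MM_add hM h hblk2, MM_one hM]
      · have hx1 := MM_block hM (K₁ + 1)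
        have e : (((K₁ + 1 : ℕ) : ℝ) + 1) = B + 1 := by rw [hB]; push_cast; ring
        rw [e] at hx1
        rw [hx1]; push_cast; ring
      · exact ⟨fun y hy => by
          rcases Multiset.mem_add.1 hy with hy | hy
          · exact h.1 y hy
          · exact hblk2.1 y hy, by
          simp only [Multiset.sum_add, Multiset.card_add]
          rw [h.2, hblk2.2]; push_cast; ring⟩
    have chain : MM M ((x+1) ::ₘ (0:ℝ) ::ₘ s) + (K₁:ℝ) ≤ MM M (x ::ₘ s) + (K₁:ℝ) + 1 :=
      calc MM M ((x+1) ::ₘ (0:ℝ) ::ₘ s) + (K₁:ℝ)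
        = MM M (((x+1) ::ₘ (0:ℝ) ::ₘ s) + (B ::ₘ Multiset.replicate K₁ (0:ℝ))
            + ({1} : Multiset ℝ)) := lhsval.symm
      _ = MM M ((x+1) ::ₘ B ::ₘ ((1:ℝ) ::ₘ (0:ℝ) ::ₘ (Multiset.replicate K₁ (0:ℝ) + s))) := by
          rw [eZ]
      _ ≤ MM M (((x+1) - 1) ::ₘ (B + 1) ::ₘ ((1:ℝ) ::ₘ (0:ℝ) ::ₘ
            (Multiset.replicate K₁ (0:ℝ) + s))) := tr
      _ = MM M ((x ::ₘ s) + ((B+1) ::ₘ Multiset.replicate (K₁+1) (0:ℝ))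
            + ({1} : Multiset ℝ)) := by rw [eZ']
      _ = MM M (x ::ₘ s) + (K₁:ℝ) + 1 := rhsval
    linarith
  linarith

lemma MM_addblocks (hM : IsCoENF M) (y : ℝ) (s : Multiset ℝ) (hy : 1 ≤ y)
    (h : CVM (y ::ₘ s)) (t : ℕ) :
    MM M ((y + t) ::ₘ (Multiset.replicate t (0:ℝ) + s)) = MM M (y ::ₘ s) + t := by
  induction t with
  | zero => simp
  | succ t ih =>
    have hcvt : CVM ((y + t) ::ₘ (Multiset.replicate t (0:ℝ) + s)) := by
      refine CVM_of _ ?_ ?_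
      · intro z hz
        simp only [Multiset.mem_cons, Multiset.mem_add, Multiset.mem_replicate] at hz
        rcases hz with rfl | ⟨-, rfl⟩ | hz
        · positivity
        · exact le_refl 0
        · exact h.1 z (by simp [hz])
      · have := h.2
        simp only [Multiset.sum_cons, Multiset.card_cons] at this ⊢
        simp only [Multiset.sum_add, Multiset.card_add, Multiset.sum_replicate,
          Multiset.card_replicate]
        push_cast at this ⊢
        simp only [smul_zero]
        linarith
    have e1 : (y + (t+1 : ℕ)) ::ₘ (Multiset.replicate (t+1) (0:ℝ) + s)
        = ((y + t) + 1) ::ₘ (0:ℝ) ::ₘ (Multiset.replicate t (0:ℝ) + s) := by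
      rw [Multiset.replicate_succ]
      have : (y + (t+1 : ℕ)) = (y + t) + 1 := by push_cast; ring
      rw [this]
      simp only [← Multiset.singleton_add]
      abel
    rw [e1, MM_plusblock hM (y + t) _ (by
      have h0 : (0:ℝ) ≤ t := Nat.cast_nonneg t
      linarith) hcvt, ih]
    push_cast
    ring

lemma MM_merge_le (hM : IsCoENF M) (a b : ℝ) (u : Multiset ℝ) (ha : 1 ≤ a) (hab : a ≤ b)
    (h : CVM (a ::ₘ b ::ₘ u)) :
    MM M (a ::ₘ b ::ₘ u) = MM M ((a + b - 1) ::ₘ u) := by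
  obtain ⟨⟨ha0, hb0, hunn⟩, hsum⟩ := CVM_cons_cons.1 h
  have hb : 1 ≤ b := le_trans ha hab
  have hSu0 : 0 ≤ u.sum := Multiset.sum_nonneg hunn
  set s : ℝ := a + b with hs
  have hs2 : 2 ≤ s := by rw [hs]; linarith
  have hcvm : CVM ((a + b - 1) ::ₘ u) := by
    refine CVM_of _ ?_ ?_
    · intro z hz
      simp only [Multiset.mem_cons] at hz
      rcases hz with rfl | hz
      · linarith
      · exact hunn z hz
    · simp only [Multiset.sum_cons, Multiset.card_cons]
      push_cast
      linarith
  -- upper bound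
  have hupp : MM M (a ::ₘ b ::ₘ u) ≤ MM M ((a + b - 1) ::ₘ u) := by
    have tr := MM_transfer' hM a b (a - 1) u h hab (by linarith) (by linarith)
    have e : (a - (a-1)) ::ₘ (b + (a-1)) ::ₘ u = (1:ℝ) ::ₘ (a + b - 1) ::ₘ u := by
      have e1 : a - (a-1) = 1 := by ring
      have e2 : b + (a-1) = a + b - 1 := by ring
      rw [e1, e2]
    rw [e] at tr
    rwa [MM_cons_one hM hcvm] at tr
  -- lower bound
  have hlow : MM M ((a + b - 1) ::ₘ u) ≤ MM M (a ::ₘ b ::ₘ u) := by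
    set t : ℕ := ⌈s⌉₊ with htdef
    have hst : s ≤ (t : ℝ) := Nat.le_ceil s
    set E : ℝ := MM M ((a + b - 1) ::ₘ u) with hE
    -- the Q₀ vector
    have hQcv : CVM ((s - 1) ::ₘ (1:ℝ) ::ₘ u) := by
      refine CVM_of _ ?_ ?_
      · intro z hz
        simp only [Multiset.mem_cons] at hz
        rcases hz with rfl | rfl | hz
        · linarith
        · norm_num
        · exact hunn z hz
      · simp only [Multiset.sum_cons, Multiset.card_cons]; push_cast; linarith
    have hQval : MM M ((s - 1) ::ₘ (1:ℝ) ::ₘ u) = E := by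
      have e : (s - 1) ::ₘ (1:ℝ) ::ₘ u = (1:ℝ) ::ₘ (s-1) ::ₘ u := Multiset.cons_swap _ _ _
      rw [e]
      have e2 : s - 1 = a + b - 1 := by rw [hs]
      rw [MM_cons_one hM (by rw [e2]; exact hcvm), e2, hE]
    -- the R_t vector
    have hRval : MM M (((s-1) + t) ::ₘ (Multiset.replicate t (0:ℝ) + ((1:ℝ) ::ₘ u)))
        = E + t := by
      rw [MM_addblocks hM (s-1) ((1:ℝ) ::ₘ u) (by linarith) hQcv t, hQval]
    have hRcv : CVM (((s-1) + t) ::ₘ (Multiset.replicate t (0:ℝ) + ((1:ℝ) ::ₘ u))) := by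
      refine CVM_of _ ?_ ?_
      · intro z hz
        simp only [Multiset.mem_cons, Multiset.mem_add, Multiset.mem_replicate] at hz
        rcases hz with rfl | ⟨-, rfl⟩ | rfl | hz
        · have : (0:ℝ) ≤ t := Nat.cast_nonneg t
          linarith
        · exact le_refl 0
        · norm_num
        · exact hunn z hz
      · simp only [Multiset.sum_cons, Multiset.card_cons, Multiset.sum_add, Multiset.card_add,
          Multiset.sum_replicate, Multiset.card_replicate, smul_zero]
        push_cast
        linarith
    -- block CVM
    have hblkcv : CVM (((t:ℝ) + 1) ::ₘ Multiset.replicate t (0:ℝ)) := by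
      refine CVM_of _ ?_ ?_
      · intro z hz
        simp only [Multiset.mem_cons, Multiset.mem_replicate] at hz
        rcases hz with rfl | ⟨-, rfl⟩
        · positivity
        · exact le_refl 0
      · simp [Multiset.sum_replicate]
    -- value of Y
    have hYval : MM M ((((s-1) ::ₘ (1:ℝ) ::ₘ u) + ((s-1) ::ₘ (1:ℝ) ::ₘ u))
        + (((t:ℝ) + 1) ::ₘ Multiset.replicate t (0:ℝ))) = E + E + t := by
      rw [MM_add hM _ hblkcv, MM_add hM hQcv hQcv, hQval, MM_block hM t]
      exact ⟨fun z hz => by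
        rcases Multiset.mem_add.1 hz with hz | hz <;> exact hQcv.1 z hz, by
        simp only [Multiset.sum_add, Multiset.card_add]
        rw [hQcv.2]; push_cast; ring⟩
    -- value of X
    have hXval : MM M (((a ::ₘ b ::ₘ u)
        + (((s-1) + t) ::ₘ (Multiset.replicate t (0:ℝ) + ((1:ℝ) ::ₘ u)))) + ({1} : Multiset ℝ))
        = MM M (a ::ₘ b ::ₘ u) + (E + t) + 0 := by
      rw [MM_add hM _ CVM_one, MM_add hM h hRcv, hRval, MM_one hM]
      exact ⟨fun z hz => by
        rcases Multiset.mem_add.1 hz with hz | hz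
        · exact h.1 z hz
        · exact hRcv.1 z hz, by
        simp only [Multiset.sum_add, Multiset.card_add]
        rw [h.2, hRcv.2]; push_cast; ring⟩
    -- transfer chain
    set w₁ : Multiset ℝ := (s-1) ::ₘ (1:ℝ) ::ₘ (1:ℝ) ::ₘ (Multiset.replicate t (0:ℝ) + (u + u))
      with hw₁
    have eY : (((s-1) ::ₘ (1:ℝ) ::ₘ u) + ((s-1) ::ₘ (1:ℝ) ::ₘ u))
        + (((t:ℝ) + 1) ::ₘ Multiset.replicate t (0:ℝ))
        = (s - 1) ::ₘ ((t:ℝ) + 1) ::ₘ w₁ := by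
      rw [hw₁]; simp only [← Multiset.singleton_add]; abel
    have hw₁nn : ∀ z ∈ w₁, 0 ≤ z := by
      intro z hz
      rw [hw₁] at hz
      simp only [Multiset.mem_cons, Multiset.mem_add, Multiset.mem_replicate] at hz
      rcases hz with rfl | rfl | rfl | ⟨-, rfl⟩ | hz | hz
      · linarith
      · norm_num
      · norm_num
      · exact le_refl 0
      · exact hunn z hz
      · exact hunn z hz
    have hw₁sum : w₁.sum = s + 1 + u.sum + u.sum := by
      rw [hw₁]
      simp only [Multiset.sum_cons, Multiset.sum_add, Multiset.sum_replicate, smul_zero]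
      ring
    have hw₁card : (Multiset.card w₁ : ℝ) = 3 + t + 2 * (Multiset.card u) := by
      rw [hw₁]
      simp only [Multiset.card_cons, Multiset.card_add, Multiset.card_replicate]
      push_cast; ring
    have hY₀cv : CVM ((s - 1) ::ₘ ((t:ℝ) + 1) ::ₘ w₁) := by
      refine CVM_of _ ?_ ?_
      · intro z hz
        simp only [Multiset.mem_cons] at hz
        rcases hz with rfl | rfl | hz
        · linarith
        · positivity
        · exact hw₁nn z hz
      · simp only [Multiset.sum_cons, Multiset.card_cons]
        rw [hw₁sum]
        push_cast
        rw [hw₁card]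
        linarith
    have tr1 := MM_transfer' hM (s-1) ((t:ℝ)+1) (a-1) w₁ hY₀cv (by linarith)
      (by linarith) (by linarith)
    have etr1 : ((s-1) - (a-1)) ::ₘ (((t:ℝ)+1) + (a-1)) ::ₘ w₁
        = (s - 1) ::ₘ ((t:ℝ) + a) ::ₘ (b ::ₘ (1:ℝ) ::ₘ (1:ℝ)
            ::ₘ (Multiset.replicate t (0:ℝ) + (u + u))) := by
      have e1 : (s-1) - (a-1) = b := by rw [hs]; ring
      have e2 : ((t:ℝ)+1) + (a-1) = (t:ℝ) + a := by ring
      rw [e1, e2, hw₁]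
      simp only [← Multiset.singleton_add]; abel
    set w₂ : Multiset ℝ := b ::ₘ (1:ℝ) ::ₘ (1:ℝ) ::ₘ (Multiset.replicate t (0:ℝ) + (u + u))
      with hw₂
    have hY₁cv : CVM ((s - 1) ::ₘ ((t:ℝ) + a) ::ₘ w₂) := by
      refine CVM_of _ ?_ ?_
      · intro z hz
        rw [hw₂] at hz
        simp only [Multiset.mem_cons, Multiset.mem_add, Multiset.mem_replicate] at hz
        rcases hz with rfl | rfl | rfl | rfl | rfl | ⟨-, rfl⟩ | hz | hz
        · linarith
        · positivity
        · linarith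
        · norm_num
        · norm_num
        · exact le_refl 0
        · exact hunn z hz
        · exact hunn z hz
      · rw [hw₂]
        simp only [Multiset.sum_cons, Multiset.card_cons, Multiset.sum_add, Multiset.card_add,
          Multiset.sum_replicate, Multiset.card_replicate, smul_zero]
        push_cast
        linarith
    have tr2 := MM_transfer' hM (s-1) ((t:ℝ)+a) (b-1) w₂ hY₁cv (by linarith)
      (by linarith) (by linarith)
    have etr2 : ((s-1) - (b-1)) ::ₘ (((t:ℝ)+a) + (b-1)) ::ₘ w₂
        = ((a ::ₘ b ::ₘ u)
          + (((s-1) + t) ::ₘ (Multiset.replicate t (0:ℝ) + ((1:ℝ) ::ₘ u)))) + ({1} : Multiset ℝ) := by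
      have e1 : (s-1) - (b-1) = a := by rw [hs]; ring
      have e2 : ((t:ℝ)+a) + (b-1) = (s-1) + t := by rw [hs]; ring
      rw [e1, e2, hw₂]
      simp only [← Multiset.singleton_add]; abel
    have chain : E + E + t ≤ MM M (a ::ₘ b ::ₘ u) + (E + t) + 0 := by
      calc E + E + (t:ℝ)
          = MM M ((s - 1) ::ₘ ((t:ℝ) + 1) ::ₘ w₁) := by rw [← eY, hYval]
        _ ≤ MM M (((s-1) - (a-1)) ::ₘ (((t:ℝ)+1) + (a-1)) ::ₘ w₁) := tr1
        _ = MM M ((s - 1) ::ₘ ((t:ℝ) + a) ::ₘ w₂) := by rw [etr1, hw₂]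
        _ ≤ MM M (((s-1) - (b-1)) ::ₘ (((t:ℝ)+a) + (b-1)) ::ₘ w₂) := tr2
        _ = MM M (a ::ₘ b ::ₘ u) + (E + t) + 0 := by rw [etr2, hXval]
    linarith
  linarith

lemma MM_merge (hM : IsCoENF M) (a b : ℝ) (u : Multiset ℝ) (ha : 1 ≤ a) (hb : 1 ≤ b)
    (h : CVM (a ::ₘ b ::ₘ u)) :
    MM M (a ::ₘ b ::ₘ u) = MM M ((a + b - 1) ::ₘ u) := by
  rcases le_total a b with hab | hab
  · exact MM_merge_le hM a b u ha hab h
  · have e : a ::ₘ b ::ₘ u = b ::ₘ a ::ₘ u := Multiset.cons_swap _ _ _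
    rw [e, MM_merge_le hM b a u hb hab (by rwa [← e])]
    ring_nf

lemma sum_le_card {s : Multiset ℝ} (h : ∀ x ∈ s, x ≤ 1) : s.sum ≤ (Multiset.card s : ℝ) := by
  induction s using Multiset.induction with
  | empty => simp
  | cons a t ih =>
    simp only [Multiset.sum_cons, Multiset.card_cons]
    push_cast
    have h1 : a ≤ 1 := h a (by simp)
    have h2 : t.sum ≤ (Multiset.card t : ℝ) := ih fun x hx => h x (by simp [hx])
    linarith

lemma sum_lt_card {s : Multiset ℝ} (hne : s ≠ 0) (h : ∀ x ∈ s, x < 1) :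
    s.sum < (Multiset.card s : ℝ) := by
  obtain ⟨a, ha⟩ := Multiset.exists_mem_of_ne_zero hne
  obtain ⟨t, rfl⟩ := Multiset.exists_cons_of_mem ha
  simp only [Multiset.sum_cons, Multiset.card_cons]
  push_cast
  have h1 : a < 1 := h a (by simp)
  have h2 : t.sum ≤ (Multiset.card t : ℝ) := sum_le_card fun x hx => (h x (by simp [hx])).le
  linarith

lemma MM_reduce (hM : IsCoENF M) : ∀ (n : ℕ) (bigs w : Multiset ℝ),
    Multiset.card bigs = n + 1 → (∀ x ∈ bigs, 1 ≤ x) → CVM (bigs + w) →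
    MM M (bigs + w) = MM M ((bigs.sum - n) ::ₘ w) := by
  intro n
  induction n with
  | zero =>
    intro bigs w hcard hbig hcv
    obtain ⟨x, rfl⟩ := Multiset.card_eq_one.1 hcard
    have e : ({x} : Multiset ℝ) + w = x ::ₘ w := by
      rw [Multiset.singleton_add]
    rw [e]
    congr 1
    simp
  | succ n ih =>
    intro bigs w hcard hbig hcv
    have h0 : bigs ≠ 0 := by
      intro h0; rw [h0] at hcard; simp at hcard
    obtain ⟨a, ha⟩ := Multiset.exists_mem_of_ne_zero h0
    obtain ⟨s₁, rfl⟩ := Multiset.exists_cons_of_mem ha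
    have h1 : s₁ ≠ 0 := by
      intro h1; rw [h1] at hcard; simp at hcard
    obtain ⟨b, hb⟩ := Multiset.exists_mem_of_ne_zero h1
    obtain ⟨rest, rfl⟩ := Multiset.exists_cons_of_mem hb
    have ha1 : 1 ≤ a := hbig a (by simp)
    have hb1 : 1 ≤ b := hbig b (by simp)
    have e : (a ::ₘ b ::ₘ rest) + w = a ::ₘ b ::ₘ (rest + w) := by
      simp only [← Multiset.singleton_add]; abel
    have hcv' : CVM (a ::ₘ b ::ₘ (rest + w)) := by rw [← e]; exact hcv
    rw [e, MM_merge hM a b (rest + w) ha1 hb1 hcv']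
    have e2 : (a + b - 1) ::ₘ (rest + w) = ((a + b - 1) ::ₘ rest) + w := by
      simp only [← Multiset.singleton_add]; abel
    have hcard' : Multiset.card ((a + b - 1) ::ₘ rest) = n + 1 := by
      simp only [Multiset.card_cons] at hcard ⊢
      omega
    have hbig' : ∀ x ∈ (a + b - 1) ::ₘ rest, 1 ≤ x := by
      intro x hx
      simp only [Multiset.mem_cons] at hx
      rcases hx with rfl | hx
      · linarith
      · exact hbig x (by simp [hx])
    have hcv'' : CVM (((a + b - 1) ::ₘ rest) + w) := by
      rw [← e2]
      refine CVM_of _ ?_ ?_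
      · intro z hz
        simp only [Multiset.mem_cons, Multiset.mem_add] at hz
        rcases hz with rfl | hz | hz
        · linarith
        · exact hcv.1 z (Multiset.mem_add.2 (Or.inl (by simp [hz])))
        · exact hcv.1 z (Multiset.mem_add.2 (Or.inr hz))
      · have h2 := hcv.2
        simp only [Multiset.sum_cons, Multiset.card_cons, Multiset.sum_add,
          Multiset.card_add] at h2 ⊢
        push_cast at h2 ⊢
        linarith
    rw [e2, ih ((a + b - 1) ::ₘ rest) w hcard' hbig' hcv'']
    congr 2
    simp only [Multiset.sum_cons]
    push_cast
    ring

lemma sum_map_sub_one (t : Multiset ℝ) :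
    (t.map (fun x => x - 1)).sum = t.sum - (Multiset.card t : ℝ) := by
  induction t using Multiset.induction with
  | empty => simp
  | cons a u ih =>
    simp only [Multiset.map_cons, Multiset.sum_cons, Multiset.card_cons, ih]
    push_cast
    ring

lemma psi (hM : IsCoENF M) : ∀ (w : Multiset ℝ), (∀ x ∈ w, 0 ≤ x ∧ x < 1) →
    MM M (((Multiset.card w : ℝ) + 1 - w.sum) ::ₘ w)
      = (w.map (fun x => MM M ((2 - x) ::ₘ {x}) - 1 + x)).sum
        + ((Multiset.card w : ℝ) - w.sum) := by
  intro w
  induction w using Multiset.induction with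
  | empty =>
    intro _
    simp only [Multiset.card_zero, Multiset.sum_zero, Multiset.map_zero, Nat.cast_zero]
    norm_num
    exact MM_one hM
  | cons x w' ih =>
    intro hw
    obtain ⟨hx0, hx1⟩ := hw x (by simp)
    have hw' : ∀ y ∈ w', 0 ≤ y ∧ y < 1 := fun y hy => hw y (by simp [hy])
    have hσr : w'.sum ≤ (Multiset.card w' : ℝ) := sum_le_card (fun y hy => (hw' y hy).2.le)
    have hσ0 : 0 ≤ w'.sum := Multiset.sum_nonneg (fun y hy => (hw' y hy).1)
    set R' : ℝ := (Multiset.card w' : ℝ) + 1 - w'.sum with hR'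
    have hR1 : 1 ≤ R' := by rw [hR']; linarith
    have hcvm : CVM ((2 - x) ::ₘ R' ::ₘ (x ::ₘ w')) := by
      refine CVM_of _ ?_ ?_
      · intro z hz
        simp only [Multiset.mem_cons] at hz
        rcases hz with rfl | rfl | rfl | hz
        · linarith
        · linarith
        · exact hx0
        · exact (hw' z hz).1
      · simp only [Multiset.sum_cons, Multiset.card_cons, hR']
        push_cast
        ring
    have hmerge := MM_merge hM (2 - x) R' (x ::ₘ w') (by linarith) hR1 hcvm
    have e1 : ((Multiset.card (x ::ₘ w') : ℝ) + 1 - (x ::ₘ w').sum) = (2 - x) + R' - 1 := by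
      simp only [Multiset.card_cons, Multiset.sum_cons, hR']
      push_cast
      ring
    have e2 : (2 - x) ::ₘ R' ::ₘ (x ::ₘ w') = ((2 - x) ::ₘ {x}) + (R' ::ₘ w') := by
      simp only [← Multiset.singleton_add]; abel
    have hcv1 : CVM ((2 - x) ::ₘ ({x} : Multiset ℝ)) := by
      refine CVM_of _ ?_ ?_
      · intro z hz
        simp only [Multiset.mem_cons, Multiset.mem_singleton] at hz
        rcases hz with rfl | rfl
        · linarith
        · exact hx0
      · simp
    have hcv2 : CVM (R' ::ₘ w') := by
      refine CVM_of _ ?_ ?_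
      · intro z hz
        simp only [Multiset.mem_cons] at hz
        rcases hz with rfl | hz
        · linarith
        · exact (hw' z hz).1
      · simp only [Multiset.sum_cons, Multiset.card_cons, hR']
        push_cast
        ring
    calc MM M (((Multiset.card (x ::ₘ w') : ℝ) + 1 - (x ::ₘ w').sum) ::ₘ (x ::ₘ w'))
        = MM M (((2 - x) + R' - 1) ::ₘ (x ::ₘ w')) := by rw [e1]
      _ = MM M ((2 - x) ::ₘ R' ::ₘ (x ::ₘ w')) := hmerge.symm
      _ = MM M ((2 - x) ::ₘ {x}) + MM M (R' ::ₘ w') := by rw [e2, MM_add hM hcv1 hcv2]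
      _ = MM M ((2 - x) ::ₘ {x})
          + ((w'.map (fun y => MM M ((2 - y) ::ₘ {y}) - 1 + y)).sum
            + ((Multiset.card w' : ℝ) - w'.sum)) := by rw [ih hw']
      _ = ((x ::ₘ w').map (fun y => MM M ((2 - y) ::ₘ {y}) - 1 + y)).sum
          + ((Multiset.card (x ::ₘ w') : ℝ) - (x ::ₘ w').sum) := by
          simp only [Multiset.map_cons, Multiset.sum_cons, Multiset.card_cons]
          push_cast
          ring

lemma canon (hM : IsCoENF M) {N : ℕ} (P : Fin N → ℝ) (hP : IsCountingVector P) (hN : 0 < N) :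
    M N P = MM M ((((Multiset.card (entriesLtOne P) : ℝ) + 1 - (entriesLtOne P).sum))
      ::ₘ entriesLtOne P) := by
  set s : Multiset ℝ := Finset.univ.val.map P with hsdef
  have hofn : (↑(List.ofFn P) : Multiset ℝ) = s := by rw [hsdef, Fin.univ_val_map]
  have hbr : M N P = MM M s := by rw [bridge hM P hP, hofn]
  have hssum : s.sum = (N : ℝ) := by
    have : s.sum = ∑ i, P i := rfl
    rw [this, hP.2]
  have hscard : Multiset.card s = N := by
    rw [hsdef]
    simp
  set w : Multiset ℝ := s.filter (fun x => x < 1) with hwdef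
  set bigs : Multiset ℝ := s.filter (fun x => ¬ x < 1) with hbdef
  have hdecomp : bigs + w = s := by
    rw [hbdef, hwdef, add_comm]
    exact Multiset.filter_add_not _ s
  have hwE : w = entriesLtOne P := rfl
  have hbig1 : ∀ x ∈ bigs, 1 ≤ x := by
    intro x hx
    rw [hbdef] at hx
    exact not_lt.1 (Multiset.mem_filter.1 hx).2
  have hsnn : ∀ x ∈ s, 0 ≤ x := by
    intro x hx
    rw [hsdef] at hx
    obtain ⟨i, -, rfl⟩ := Multiset.mem_map.1 hx
    exact hP.1 i
  have hcvs : CVM s := ⟨hsnn, by rw [hssum, hscard]⟩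
  have hbne : bigs ≠ 0 := by
    intro h0
    rw [h0, zero_add] at hdecomp
    have hlt : ∀ x ∈ s, x < 1 := by
      intro x hx
      rw [← hdecomp] at hx
      exact (Multiset.mem_filter.1 hx).2
    have hne : s ≠ 0 := by
      intro h1
      rw [h1] at hscard
      simp at hscard
      omega
    have := sum_lt_card hne hlt
    rw [hssum, hscard] at this
    exact lt_irrefl _ this
  obtain ⟨n, hn⟩ : ∃ n, Multiset.card bigs = n + 1 := by
    have : Multiset.card bigs ≠ 0 := by
      intro h0
      exact hbne (Multiset.card_eq_zero.1 h0)
    exact ⟨Multiset.card bigs - 1, by omega⟩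
  have hred := MM_reduce hM n bigs w hn hbig1 (by rw [hdecomp]; exact hcvs)
  have hcards : Multiset.card bigs + Multiset.card w = N := by
    rw [← hscard, ← hdecomp]
    simp
  have hsums : bigs.sum + w.sum = (N : ℝ) := by
    rw [← hssum, ← hdecomp]
    simp
  have hncast : (n : ℝ) = (N : ℝ) - (Multiset.card w : ℝ) - 1 := by
    have h1 : n + 1 + Multiset.card w = N := by rw [← hn]; exact hcards
    have h2 := congrArg (fun k : ℕ => (k : ℝ)) h1
    push_cast at h2
    linarith
  have hhead : bigs.sum - (n : ℝ) = (Multiset.card w : ℝ) + 1 - w.sum := by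
    rw [hncast]; linarith
  rw [hbr, ← hdecomp, hred, hhead, hwE]

lemma M_zero (hM : IsCoENF M) (P : Fin 0 → ℝ) : M 0 P = 0 := by
  have hP : IsCountingVector P := ⟨fun i => i.elim0, by simp⟩
  rw [bridge hM P hP]
  have : (↑(List.ofFn P) : Multiset ℝ) = 0 := by simp
  rw [this, MM_nil hM]

end CoENFAux

theorem coENF_separable (M : ∀ N : ℕ, (Fin N → ℝ) → ℝ) (hM : IsCoENF M) :
    -- M depends only on the multiset of entries strictly less than 1 ...
    (∀ (N : ℕ) (P Q : Fin N → ℝ), IsCountingVector P → IsCountingVector Q →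
      entriesLtOne P = entriesLtOne Q → M N P = M N Q) ∧
    -- ... and consequently M is additively separable
    (∃ m : ℝ → ℝ, ∀ (N : ℕ) (P : Fin N → ℝ), IsCountingVector P →
      M N P = ∑ i, m (P i)) := by
  constructor
  · intro N P Q hP hQ hfilt
    rcases Nat.eq_zero_or_pos N with rfl | hN
    · have hPQ : P = Q := funext fun i => i.elim0
      rw [hPQ]
    · rw [CoENFAux.canon hM P hP hN, CoENFAux.canon hM Q hQ hN, hfilt]
  · classical
    refine ⟨fun x => if x < 1 then CoENFAux.MM M ((2 - x) ::ₘ {x}) - 1 + x else x - 1, ?_⟩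
    intro N P hP
    set m : ℝ → ℝ := fun x =>
      if x < 1 then CoENFAux.MM M ((2 - x) ::ₘ {x}) - 1 + x else x - 1 with hmdef
    rcases Nat.eq_zero_or_pos N with rfl | hN
    · rw [CoENFAux.M_zero hM P]
      simp
    · set s : Multiset ℝ := Finset.univ.val.map P with hsdef
      set w : Multiset ℝ := s.filter (fun x => x < 1) with hwdef
      set bigs : Multiset ℝ := s.filter (fun x => ¬ x < 1) with hbdef
      have hdecomp : bigs + w = s := by
        rw [hbdef, hwdef, add_comm]
        exact Multiset.filter_add_not _ s
      have hwE : w = entriesLtOne P := rfl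
      have hssum : s.sum = (N : ℝ) := by
        have : s.sum = ∑ i, P i := rfl
        rw [this, hP.2]
      have hscard : Multiset.card s = N := by rw [hsdef]; simp
      have hsnn : ∀ x ∈ s, 0 ≤ x := by
        intro x hx
        rw [hsdef] at hx
        obtain ⟨i, -, rfl⟩ := Multiset.mem_map.1 hx
        exact hP.1 i
      have hw01 : ∀ x ∈ w, 0 ≤ x ∧ x < 1 := by
        intro x hx
        rw [hwdef] at hx
        exact ⟨hsnn x (Multiset.mem_of_mem_filter hx), (Multiset.mem_filter.1 hx).2⟩
      -- value of M via canon and psi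
      have hcanon := CoENFAux.canon hM P hP hN
      rw [← hwE] at hcanon
      have hpsi := CoENFAux.psi hM w hw01
      -- sum of m over the vector
      have hsum1 : ∑ i, m (P i) = (s.map m).sum := by
        rw [Finset.sum_eq_multiset_sum, hsdef, Multiset.map_map]
        rfl
      have hsplit : (s.map m).sum = (bigs.map m).sum + (w.map m).sum := by
        rw [← hdecomp, Multiset.map_add, Multiset.sum_add]
      have hbigm : (bigs.map m).sum = bigs.sum - (Multiset.card bigs : ℝ) := by
        have : bigs.map m = bigs.map (fun x => x - 1) := by
          apply Multiset.map_congr rfl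
          intro x hx
          rw [hbdef] at hx
          have : ¬ x < 1 := (Multiset.mem_filter.1 hx).2
          rw [hmdef]
          simp [this]
        rw [this, CoENFAux.sum_map_sub_one]
      have hwm : (w.map m).sum
          = (w.map (fun x => CoENFAux.MM M ((2 - x) ::ₘ {x}) - 1 + x)).sum := by
        apply congrArg
        apply Multiset.map_congr rfl
        intro x hx
        rw [hmdef]
        simp [(hw01 x hx).2]
      have hcards : (Multiset.card bigs : ℝ) + (Multiset.card w : ℝ) = (N : ℝ) := by
        have : Multiset.card bigs + Multiset.card w = N := by
          rw [← hscard, ← hdecomp]; simp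
        exact_mod_cast congrArg (fun k : ℕ => (k : ℝ)) this
      have hsums : bigs.sum + w.sum = (N : ℝ) := by
        rw [← hssum, ← hdecomp]; simp
      rw [hcanon, hpsi, hsum1, hsplit, hbigm, hwm]
      linarith
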